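/- Let n ≥ 3, ε > 0 and u_α(r) = ((r² + α²)/α)^((2-n)/2). If k > -n and n < k + 4, then there exist constants 0 < c ≤ C such that for all sufficiently small α > 0, c·α^(n-2) ≤ ∫₀^ε u_α(r)² r^(k+n-1) dr ≤ C·α^(n-2). -/

import Mathlib

open MeasureTheory

/-- Lee–Parker calculus lemma, case `n < k + 4`: the integral
`∫₀^ε u_α(r)² r^(k+n-1) dr` is comparable to `α^(n-2)` for small `α`. -/
theorem bubble_integral_asymptotics_case_gt
    (n : ℕ) (hn : 3 ≤ n) (ε : ℝ) (hε : 0 < ε) (k : ℝ) (hk : -(n : ℝ) < k)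
    (hnk : (n : ℝ) < k + 4)
    (u : ℝ → ℝ → ℝ)
    (hu : ∀ α r, u α r = ((r ^ 2 + α ^ 2) / α) ^ ((2 - (n : ℝ)) / 2)) :
    ∃ c C : ℝ, 0 < c ∧ c ≤ C ∧ ∃ α₀ : ℝ, 0 < α₀ ∧ ∀ α : ℝ, 0 < α → α < α₀ →
      c * α ^ ((n : ℝ) - 2) ≤ (∫ r in (0:ℝ)..ε, (u α r) ^ 2 * r ^ (k + n - 1)) ∧
      (∫ r in (0:ℝ)..ε, (u α r) ^ 2 * r ^ (k + n - 1)) ≤ C * α ^ ((n : ℝ) - 2) := by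
  have hn3 : (3:ℝ) ≤ (n:ℝ) := by exact_mod_cast hn
  set p : ℝ := k + 4 - n with hpdef
  have hp0 : 0 < p := by simp only [hpdef]; linarith
  have hq : (-1:ℝ) < k + 3 - n := by linarith
  have hkn : (-1:ℝ) < k + n - 1 := by linarith
  set c : ℝ := 2 ^ ((2:ℝ) - n) * ((ε ^ p - (ε/2) ^ p) / p) with hcdef
  set C : ℝ := ε ^ p / p with hCdef
  have hεhalf : (ε/2) ^ p < ε ^ p :=
    Real.rpow_lt_rpow (by positivity) (by linarith) hp0
  have htwo_le : (2:ℝ) ^ ((2:ℝ) - n) ≤ 1 :=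
    Real.rpow_le_one_of_one_le_of_nonpos (by norm_num) (by linarith)
  have htwo_pos : (0:ℝ) < 2 ^ ((2:ℝ) - n) := Real.rpow_pos_of_pos (by norm_num) _
  have hc0 : 0 < c := by
    apply mul_pos htwo_pos
    apply div_pos (by linarith) hp0
  have hcC : c ≤ C := by
    have h1 : (ε ^ p - (ε/2) ^ p) / p ≤ ε ^ p / p := by
      gcongr
      have : (0:ℝ) ≤ (ε/2) ^ p := Real.rpow_nonneg (by positivity) _
      linarith
    calc c ≤ 1 * ((ε ^ p - (ε/2) ^ p) / p) := by
            apply mul_le_mul_of_nonneg_right htwo_le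
            have : (0:ℝ) ≤ (ε/2) ^ p := Real.rpow_nonneg (by positivity) _
            have : 0 < (ε ^ p - (ε/2) ^ p) / p := div_pos (by linarith) hp0
            linarith
      _ = (ε ^ p - (ε/2) ^ p) / p := one_mul _
      _ ≤ C := h1
  refine ⟨c, C, hc0, hcC, ε/2, by positivity, ?_⟩
  intro α hα hαε
  have hαle : α ≤ ε := by linarith
  -- the key positive quantities
  have hαn : (0:ℝ) ≤ α ^ ((n:ℝ) - 2) := Real.rpow_nonneg hα.le _
  -- Step 1 : rewrite the integral
  set g : ℝ → ℝ := fun r => (r ^ 2 + α ^ 2) ^ ((2:ℝ) - n) * r ^ (k + n - 1) with hgdef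
  have hI : (∫ r in (0:ℝ)..ε, (u α r) ^ 2 * r ^ (k + n - 1))
      = α ^ ((n:ℝ) - 2) * ∫ r in (0:ℝ)..ε, g r := by
    rw [← intervalIntegral.integral_const_mul]
    apply intervalIntegral.integral_congr
    intro r _
    have hx : (0:ℝ) < r ^ 2 + α ^ 2 := by positivity
    have hdiv : (0:ℝ) ≤ (r ^ 2 + α ^ 2) / α := by positivity
    simp only [hu]
    have h1 : (((r ^ 2 + α ^ 2) / α) ^ ((2 - (n:ℝ)) / 2)) ^ (2:ℕ)
        = ((r ^ 2 + α ^ 2) / α) ^ ((2:ℝ) - n) := by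
      rw [← Real.rpow_natCast (((r ^ 2 + α ^ 2) / α) ^ ((2 - (n:ℝ)) / 2)) 2,
        ← Real.rpow_mul hdiv]
      norm_num
    rw [h1, Real.div_rpow hx.le hα.le]
    have h2 : α ^ ((2:ℝ) - n) = (α ^ ((n:ℝ) - 2))⁻¹ := by
      rw [← Real.rpow_neg hα.le]
      norm_num
    rw [h2]
    have hαn2 : (0:ℝ) < α ^ ((n:ℝ) - 2) := Real.rpow_pos_of_pos hα _
    field_simp [hgdef]
    ring
  -- integrability facts
  have hxcont : ContinuousOn (fun r : ℝ => (r ^ 2 + α ^ 2) ^ ((2:ℝ) - n)) (Set.uIcc 0 ε) := by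
    apply ContinuousOn.rpow_const
    · fun_prop
    · intro r _
      left
      positivity
  have hgint : IntervalIntegrable g volume 0 ε :=
    (intervalIntegral.intervalIntegrable_rpow' hkn).continuousOn_mul hxcont
  have hhint : IntervalIntegrable (fun r : ℝ => r ^ (k + 3 - n)) volume 0 ε :=
    intervalIntegral.intervalIntegrable_rpow' hq
  -- pointwise identity for positive r
  have hpow : ∀ r : ℝ, 0 < r →
      (r ^ 2) ^ ((2:ℝ) - n) * r ^ (k + n - 1) = r ^ (k + 3 - n) := by
    intro r hr
    rw [← Real.rpow_natCast r 2, ← Real.rpow_mul hr.le, ← Real.rpow_add hr]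
    norm_num
    ring_nf
  -- Step 2 : upper bound on ∫ g
  have hub : (∫ r in (0:ℝ)..ε, g r) ≤ C := by
    have hmono : (∫ r in (0:ℝ)..ε, g r) ≤ ∫ r in (0:ℝ)..ε, r ^ (k + 3 - n) := by
      apply intervalIntegral.integral_mono_ae_restrict hε.le hgint hhint
      have hne : ∀ᵐ r : ℝ ∂(volume.restrict (Set.Icc 0 ε)), r ≠ 0 := by
        apply ae_restrict_of_ae
        simp only [MeasureTheory.ae_iff, not_not]
        have : {a : ℝ | a = 0} = {(0:ℝ)} := by ext x; simp
        rw [this]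
        exact Real.volume_singleton
      filter_upwards [hne, ae_restrict_mem measurableSet_Icc] with r hr hmem
      have hr0 : 0 < r := lt_of_le_of_ne hmem.1 (Ne.symm hr)
      have hb : (r ^ 2 + α ^ 2) ^ ((2:ℝ) - n) ≤ (r ^ 2) ^ ((2:ℝ) - n) :=
        Real.rpow_le_rpow_of_nonpos (by positivity) (by nlinarith) (by linarith)
      calc g r ≤ (r ^ 2) ^ ((2:ℝ) - n) * r ^ (k + n - 1) := by
            apply mul_le_mul_of_nonneg_right hb (Real.rpow_nonneg hr0.le _)
        _ = r ^ (k + 3 - n) := hpow r hr0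
    have hval : (∫ r in (0:ℝ)..ε, r ^ (k + 3 - n)) = C := by
      rw [integral_rpow (Or.inl hq)]
      have h0 : (0:ℝ) ^ (k + 3 - n + 1) = 0 := Real.zero_rpow (by linarith)
      rw [h0, hCdef]
      norm_num
      congr 1 <;> [skip; skip] <;> ring_nf
      all_goals (rw [hpdef]; ring_nf)
    linarith [hmono, hval.le, hval.ge]
  -- Step 3 : lower bound on ∫ g
  have hsub1 : IntervalIntegrable g volume 0 α :=
    hgint.mono_set (Set.uIcc_subset_uIcc (by simp [hε.le]) (by
      simp [Set.uIcc_of_le hε.le]; constructor <;> linarith))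
  have hsub2 : IntervalIntegrable g volume α ε :=
    hgint.mono_set (Set.uIcc_subset_uIcc (by
      simp [Set.uIcc_of_le hε.le]; constructor <;> linarith) (by simp [hε.le]))
  have hsplit : (∫ r in (0:ℝ)..ε, g r) = (∫ r in (0:ℝ)..α, g r) + ∫ r in α..ε, g r :=
    (intervalIntegral.integral_add_adjacent_intervals hsub1 hsub2).symm
  have h1nn : 0 ≤ ∫ r in (0:ℝ)..α, g r := by
    apply intervalIntegral.integral_nonneg hα.le
    intro r hr
    exact mul_nonneg (Real.rpow_nonneg (by positivity) _) (Real.rpow_nonneg hr.1 _)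
  have hlbint : IntervalIntegrable (fun r : ℝ => 2 ^ ((2:ℝ) - n) * r ^ (k + 3 - n)) volume α ε :=
    (intervalIntegral.intervalIntegrable_rpow' hq).const_mul _
  have h2lb : (∫ r in α..ε, 2 ^ ((2:ℝ) - n) * r ^ (k + 3 - n)) ≤ ∫ r in α..ε, g r := by
    apply intervalIntegral.integral_mono_on hαle hlbint hsub2
    intro r hr
    have hr0 : 0 < r := lt_of_lt_of_le hα hr.1
    have hb : (2 * r ^ 2) ^ ((2:ℝ) - n) ≤ (r ^ 2 + α ^ 2) ^ ((2:ℝ) - n) :=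
      Real.rpow_le_rpow_of_nonpos (by positivity) (by nlinarith [hr.1]) (by linarith)
    have hmul : (2 * r ^ 2) ^ ((2:ℝ) - n) = 2 ^ ((2:ℝ) - n) * (r ^ 2) ^ ((2:ℝ) - n) :=
      Real.mul_rpow (by norm_num) (by positivity)
    calc 2 ^ ((2:ℝ) - n) * r ^ (k + 3 - n)
        = 2 ^ ((2:ℝ) - n) * ((r ^ 2) ^ ((2:ℝ) - n) * r ^ (k + n - 1)) := by
          rw [hpow r hr0]
      _ = (2 * r ^ 2) ^ ((2:ℝ) - n) * r ^ (k + n - 1) := by rw [hmul]; ring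
      _ ≤ g r := mul_le_mul_of_nonneg_right hb (Real.rpow_nonneg hr0.le _)
  have h2val : (∫ r in α..ε, 2 ^ ((2:ℝ) - n) * r ^ (k + 3 - n))
      = 2 ^ ((2:ℝ) - n) * ((ε ^ p - α ^ p) / p) := by
    rw [intervalIntegral.integral_const_mul, integral_rpow (Or.inl hq)]
    congr 1
    have : k + 3 - n + 1 = p := by rw [hpdef]; ring
    rw [this]
  have hαp : α ^ p ≤ (ε/2) ^ p := Real.rpow_le_rpow hα.le hαε.le hp0.le
  have hlb : c ≤ ∫ r in (0:ℝ)..ε, g r := by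
    have hstep : c ≤ 2 ^ ((2:ℝ) - n) * ((ε ^ p - α ^ p) / p) := by
      rw [hcdef]
      apply mul_le_mul_of_nonneg_left ?_ htwo_pos.le
      gcongr
    calc c ≤ 2 ^ ((2:ℝ) - n) * ((ε ^ p - α ^ p) / p) := hstep
      _ = ∫ r in α..ε, 2 ^ ((2:ℝ) - n) * r ^ (k + 3 - n) := h2val.symm
      _ ≤ ∫ r in α..ε, g r := h2lb
      _ ≤ (∫ r in (0:ℝ)..α, g r) + ∫ r in α..ε, g r := by linarith
      _ = ∫ r in (0:ℝ)..ε, g r := hsplit.symm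
  -- conclude
  rw [hI]
  constructor
  · calc c * α ^ ((n:ℝ) - 2) ≤ (∫ r in (0:ℝ)..ε, g r) * α ^ ((n:ℝ) - 2) :=
        mul_le_mul_of_nonneg_right hlb hαn
      _ = α ^ ((n:ℝ) - 2) * ∫ r in (0:ℝ)..ε, g r := mul_comm _ _
  · calc α ^ ((n:ℝ) - 2) * ∫ r in (0:ℝ)..ε, g r
        = (∫ r in (0:ℝ)..ε, g r) * α ^ ((n:ℝ) - 2) := mul_comm _ _
      _ ≤ C * α ^ ((n:ℝ) - 2) := mul_le_mul_of_nonneg_right hub hαn
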